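/- Let S be a locally C-finite semilattice. Then the Schützenberger representation Γ : ℓ¹(S) → ℓ¹(S) (from the convolution algebra to ℓ¹(S) with pointwise multiplication) is a continuous algebra isomorphism, and its inverse has operator norm at most 2^{C−1}. -/

import Mathlib

set_option maxHeartbeats 2000000
open scoped ENNReal NNReal
open IncidenceAlgebra


/-- The Schützenberger representation of a (possibly infinite) semilattice,
`(Γ a)(x) = Σ_{t : x ≼ t} a(t)` where `x ≼ t ↔ x * t = x`. -/
noncomputable def schutzRep {S : Type*} [Mul S] (a : S → ℂ) : S → ℂ :=
  fun x => ∑' t : {t : S // x * t = x}, (a t : ℂ)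

/-- The convolution product on `ℓ¹(S)`: `(a * b)(z) = Σ_{(s,t) : s t = z} a(s) b(t)`. -/
noncomputable def l1Conv {S : Type*} [Mul S] (a b : S → ℂ) : S → ℂ :=
  fun z => ∑' p : {p : S × S // p.1 * p.2 = z}, a (p : S × S).1 * b (p : S × S).2

section Helpers
variable {ι : Type*}

lemma tsum_subtype_eq_sum' {M : Type*} [AddCommMonoid M] [TopologicalSpace M] [T2Space M]
    {f : ι → M} {s : Set ι} (hs : s.Finite) :
    ∑' x : s, f x = ∑ x ∈ hs.toFinset, f x := by
  classical
  rw [tsum_subtype,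
    tsum_eq_sum (s := hs.toFinset) (fun b hb => Set.indicator_of_notMem (by simpa using hb) f)]
  exact Finset.sum_congr rfl fun x hx => Set.indicator_of_mem (by simpa using hx) f

lemma summable_norm_iff_enn (f : ι → ℂ) :
    Summable (fun i => ‖f i‖) ↔ ∑' i, (‖f i‖₊ : ℝ≥0∞) ≠ ⊤ := by
  simp only [← coe_nnnorm]
  rw [NNReal.summable_coe]
  exact Iff.symm ENNReal.tsum_coe_ne_top_iff_summable

lemma enn_norm_tsum_le (f : ι → ℂ) : (‖∑' i, f i‖₊ : ℝ≥0∞) ≤ ∑' i, (‖f i‖₊ : ℝ≥0∞) := by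
  by_cases hs : Summable (fun i => ‖f i‖₊)
  · rw [← ENNReal.coe_tsum hs]
    refine ENNReal.coe_le_coe.2 ?_
    have hs' : Summable (fun i => ‖f i‖) := by simpa using NNReal.summable_coe.2 hs
    rw [← NNReal.coe_le_coe, NNReal.coe_tsum]
    simp only [coe_nnnorm]
    exact norm_tsum_le_tsum_norm hs'
  · have : ∑' i, (‖f i‖₊ : ℝ≥0∞) = ⊤ := by
      by_contra h; exact hs (ENNReal.tsum_coe_ne_top_iff_summable.mp h)
    simp [this]

lemma summable_of_enn (f : ι → ℂ) (h : ∑' i, (‖f i‖₊ : ℝ≥0∞) ≠ ⊤) : Summable f := by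
  have hs : Summable (fun i => ‖f i‖₊) := ENNReal.tsum_coe_ne_top_iff_summable.mp h
  exact Summable.of_norm (by simpa using NNReal.summable_coe.2 hs)

lemma tsum_norm_eq_toReal (f : ι → ℂ) (h : Summable fun i => ‖f i‖) :
    ∑' i, ‖f i‖ = (∑' i, (‖f i‖₊ : ℝ≥0∞)).toReal := by
  have hs : Summable (fun i => ‖f i‖₊) := by
    simp only [← coe_nnnorm] at h; rwa [NNReal.summable_coe] at h
  rw [← ENNReal.coe_tsum hs]
  simp [NNReal.coe_tsum]
end Helpers

section OrderPart
variable {S : Type*} [Preorder S]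

lemma fubini_le (w : S → S → ℝ≥0∞) (g : S → ℝ≥0∞) (K : ℝ≥0∞)
    (hw : ∀ t : S, ∑' x : {x : S // x ≤ t}, w x t ≤ K) :
    ∑' x : S, ∑' t : {t : S // x ≤ t}, w x t * g t ≤ K * ∑' t : S, g t := by
  classical
  have h1 : ∀ x : S, ∑' t : {t : S // x ≤ t}, w x t * g t
      = ∑' t : S, Set.indicator {t : S | x ≤ t} (fun t => w x t * g t) t := by
    intro x; exact tsum_subtype {t : S | x ≤ t} (fun t => w x t * g t)
  calc ∑' x : S, ∑' t : {t : S // x ≤ t}, w x t * g t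
      = ∑' (x : S) (t : S), Set.indicator {t : S | x ≤ t} (fun t => w x t * g t) t := by
        exact tsum_congr h1
    _ = ∑' (t : S) (x : S), Set.indicator {t : S | x ≤ t} (fun t => w x t * g t) t :=
        ENNReal.tsum_comm
    _ = ∑' (t : S) (x : S), Set.indicator {x : S | x ≤ t} (fun x => w x t * g t) x := by
        refine tsum_congr fun t => tsum_congr fun x => ?_
        simp only [Set.indicator_apply, Set.mem_setOf_eq]
    _ = ∑' (t : S), (∑' x : {x : S // x ≤ t}, w x t) * g t := by
        refine tsum_congr fun t => ?_
        rw [← tsum_subtype {x : S | x ≤ t} (fun x => w x t * g t)]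
        exact ENNReal.tsum_mul_right
    _ ≤ ∑' (t : S), K * g t := ENNReal.tsum_le_tsum fun t =>
        mul_le_mul_left (hw t) _
    _ = K * ∑' t : S, g t := ENNReal.tsum_mul_left
end OrderPart

section LemA
variable {S : Type*} [Preorder S]

lemma lemA (hfin : ∀ t : S, {x : S | x ≤ t}.Finite)
    (k : S → S → ℂ) (K : ℝ≥0)
    (hK : ∀ t : S, ∑ x ∈ (hfin t).toFinset, (‖k x t‖₊ : ℝ≥0∞) ≤ (K : ℝ≥0∞))
    (a : S → ℂ) (ha : Summable fun t => ‖a t‖) :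
    Summable (fun x : S => ‖∑' t : {t : S // x ≤ t}, k x t * a t‖) ∧
    ∑' x : S, ‖∑' t : {t : S // x ≤ t}, k x t * a t‖ ≤ (K : ℝ) * ∑' t : S, ‖a t‖ := by
  have hatop : ∑' t : S, (‖a t‖₊ : ℝ≥0∞) ≠ ⊤ := (summable_norm_iff_enn a).1 ha
  have hw : ∀ t : S, ∑' x : {x : S // x ≤ t}, (‖k x t‖₊ : ℝ≥0∞) ≤ (K : ℝ≥0∞) := by
    intro t
    have := tsum_subtype_eq_sum' (f := fun x : S => (‖k x t‖₊ : ℝ≥0∞)) (hfin t)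
    exact this.le.trans (hK t)
  have key : ∑' x : S, (‖∑' t : {t : S // x ≤ t}, k x t * a t‖₊ : ℝ≥0∞)
      ≤ (K : ℝ≥0∞) * ∑' t : S, (‖a t‖₊ : ℝ≥0∞) := by
    refine le_trans (ENNReal.tsum_le_tsum fun x => enn_norm_tsum_le _) ?_
    have hcong : ∀ x : S, ∑' t : {t : S // x ≤ t}, ((‖k x t * a t‖₊ : ℝ≥0∞))
        = ∑' t : {t : S // x ≤ t}, (‖k x (t : S)‖₊ : ℝ≥0∞) * (‖a (t : S)‖₊ : ℝ≥0∞) := by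
      intro x
      exact tsum_congr fun t => by rw [nnnorm_mul, ENNReal.coe_mul]
    calc ∑' (x : S), ∑' t : {t : S // x ≤ t}, ((‖k x t * a t‖₊ : ℝ≥0∞))
        = ∑' (x : S), ∑' t : {t : S // x ≤ t},
            (‖k x (t : S)‖₊ : ℝ≥0∞) * (‖a (t : S)‖₊ : ℝ≥0∞) := tsum_congr hcong
      _ ≤ (K : ℝ≥0∞) * ∑' t : S, (‖a t‖₊ : ℝ≥0∞) :=
          fubini_le (fun x t => (‖k x t‖₊ : ℝ≥0∞)) (fun t => (‖a t‖₊ : ℝ≥0∞)) _ hw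
  have hBne : (K : ℝ≥0∞) * ∑' t : S, (‖a t‖₊ : ℝ≥0∞) ≠ ⊤ :=
    ENNReal.mul_ne_top ENNReal.coe_ne_top hatop
  have hsumm : Summable (fun x : S => ‖∑' t : {t : S // x ≤ t}, k x t * a t‖) :=
    (summable_norm_iff_enn _).2 (ne_top_of_le_ne_top hBne key)
  refine ⟨hsumm, ?_⟩
  rw [tsum_norm_eq_toReal _ hsumm]
  refine le_trans (ENNReal.toReal_mono hBne key) ?_
  rw [ENNReal.toReal_mul, ← tsum_norm_eq_toReal a ha]
  simp
end LemA

section MuBound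
variable {S : Type*} [PartialOrder S] [LocallyFiniteOrder S] [DecidableEq S]

lemma mu_sum_bound (s : S) : ∀ n : ℕ, ∀ T : Finset S, (∀ x ∈ T, x ≤ s) → s ∈ T →
    (∀ x ∈ T, ∀ y, x ≤ y → y ≤ s → y ∈ T) → T.card ≤ n + 1 →
    ∑ x ∈ T, ‖(mu ℂ x s : ℂ)‖₊ ≤ 2 ^ n := by
  intro n
  induction n with
  | zero =>
    intro T hTs hsT hup hcard
    have hT : T = {s} := by
      refine Finset.eq_singleton_iff_unique_mem.2 ⟨hsT, fun y hy => ?_⟩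
      by_contra hne
      have := Finset.one_lt_card.2 ⟨y, hy, s, hsT, hne⟩
      omega
    simp [hT]
  | succ n ih =>
    intro T hTs hsT hup hcard
    by_cases hc : T.card ≤ n + 1
    · exact (ih T hTs hsT hup hc).trans (pow_le_pow_right₀ one_le_two (Nat.le_succ n))
    · push_neg at hc
      obtain ⟨x, hxT, hxmin⟩ : ∃ x ∈ T, ∀ y ∈ T, ¬ y < x := by
        obtain ⟨x, hx⟩ := Set.Finite.exists_minimal T.finite_toSet ⟨s, hsT⟩
        exact ⟨x, hx.1, fun y hy hlt => hlt.not_ge (hx.2 hy hlt.le)⟩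
      have hxs : x ≠ s := by
        intro hxeq
        obtain ⟨y, hyT, hyx⟩ := Finset.exists_mem_ne (s := T) (by omega) x
        exact hxmin y hyT (lt_of_le_of_ne (hxeq ▸ hTs y hyT) (hxeq ▸ hyx))
      have hsT2 : s ∈ (T.erase x) := Finset.mem_erase.2 ⟨Ne.symm hxs, hsT⟩
      have hup' : ∀ a ∈ (T.erase x), ∀ y, a ≤ y → y ≤ s → y ∈ (T.erase x) := by
        intro a haT2 y hay hys
        have haT := Finset.mem_erase.1 haT2
        refine Finset.mem_erase.2 ⟨?_, hup a haT.2 y hay hys⟩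
        intro hyx
        exact hxmin a haT.2 (lt_of_le_of_ne (hyx ▸ hay) haT.1)
      have hcard' : (T.erase x).card ≤ n + 1 := by
        rw [Finset.card_erase_of_mem hxT]; omega
      have hIH := ih (T.erase x) (fun a ha => hTs a (Finset.mem_erase.1 ha).2) hsT2 hup' hcard'
      have hxbound : ‖(mu ℂ x s : ℂ)‖₊ ≤ ∑ z ∈ (T.erase x), ‖(mu ℂ z s : ℂ)‖₊ := by
        have h1 : ‖(mu ℂ x s : ℂ)‖₊ ≤ ∑ z ∈ Finset.Ioc x s, ‖(mu ℂ z s : ℂ)‖₊ := by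
          rw [mu_eq_neg_sum_Ioc_of_ne hxs, nnnorm_neg]
          exact nnnorm_sum_le _ _
        refine h1.trans (Finset.sum_le_sum_of_subset ?_)
        intro z hz
        rw [Finset.mem_Ioc] at hz
        exact Finset.mem_erase.2 ⟨hz.1.ne', hup x hxT z hz.1.le hz.2⟩
      calc ∑ z ∈ T, ‖(mu ℂ z s : ℂ)‖₊
          = ‖(mu ℂ x s : ℂ)‖₊ + ∑ z ∈ (T.erase x), ‖(mu ℂ z s : ℂ)‖₊ :=
            (Finset.add_sum_erase T _ hxT).symm
        _ ≤ 2 ^ n + 2 ^ n := add_le_add (hxbound.trans hIH) hIH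
        _ = 2 ^ (n + 1) := by ring
end MuBound
section MuBound2
variable {S : Type*} [PartialOrder S] [LocallyFiniteOrder S] [DecidableEq S] {C : ℕ}

lemma mu_toFinset_sum_le (hC1 : 1 ≤ C) (hfin : ∀ t : S, {x : S | x ≤ t}.Finite)
    (hcard : ∀ t : S, {x : S | x ≤ t}.ncard ≤ C) (t : S) :
    ∑ x ∈ (hfin t).toFinset, ‖(mu ℂ x t : ℂ)‖₊ ≤ 2 ^ (C - 1) := by
  refine mu_sum_bound t (C - 1) _ ?_ ?_ ?_ ?_
  · intro x hx; simpa using hx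
  · simp
  · intro x hx y hxy hyt
    simp only [Set.Finite.mem_toFinset, Set.mem_setOf_eq] at *
    exact hyt
  · have h1 : {x : S | x ≤ t}.ncard = (hfin t).toFinset.card :=
      Set.ncard_eq_toFinset_card _ (hfin t)
    have := hcard t
    omega

lemma mu_nnnorm_le (hC1 : 1 ≤ C) (hfin : ∀ t : S, {x : S | x ≤ t}.Finite)
    (hcard : ∀ t : S, {x : S | x ≤ t}.ncard ≤ C) (x t : S) :
    ‖(mu ℂ x t : ℂ)‖₊ ≤ 2 ^ (C - 1) := by
  by_cases h : x ≤ t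
  · refine le_trans (Finset.single_le_sum (f := fun z => ‖(mu ℂ z t : ℂ)‖₊)
      (fun _ _ => zero_le) (by simpa using h)) (mu_toFinset_sum_le hC1 hfin hcard t)
  · simp [apply_eq_zero_of_not_le h]
end MuBound2
section LemB
variable {S : Type*} [PartialOrder S] [LocallyFiniteOrder S] {C : ℕ}

/-- Equivalence: sigma over t then s, to pairs. -/
def e3 (x : S) : (Σ t : {t : S // x ≤ t}, {s : S // (t : S) ≤ s})
    ≃ {q : S × S // x ≤ q.1 ∧ q.1 ≤ q.2} where
  toFun σ := ⟨(σ.1, σ.2), σ.1.2, σ.2.2⟩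
  invFun q := ⟨⟨q.1.1, q.2.1⟩, ⟨q.1.2, q.2.2⟩⟩
  left_inv := by rintro ⟨⟨t, ht⟩, ⟨s, hs⟩⟩; rfl
  right_inv := by rintro ⟨⟨t, s⟩, h1, h2⟩; rfl

/-- Equivalence: sigma over s then t, to pairs. -/
def e4 (x : S) : (Σ s : {s : S // x ≤ s}, {t : S // x ≤ t ∧ t ≤ (s : S)})
    ≃ {q : S × S // x ≤ q.1 ∧ q.1 ≤ q.2} where
  toFun σ := ⟨(σ.2, σ.1), σ.2.2.1, σ.2.2.2⟩
  invFun q := ⟨⟨q.1.2, q.2.1.trans q.2.2⟩, ⟨q.1.1, q.2.1, q.2.2⟩⟩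
  left_inv := by rintro ⟨⟨s, hs⟩, ⟨t, h1, h2⟩⟩; rfl
  right_inv := by rintro ⟨⟨t, s⟩, h1, h2⟩; rfl

lemma lemB (hfin : ∀ t : S, {x : S | x ≤ t}.Finite)
    (hcard : ∀ t : S, {x : S | x ≤ t}.ncard ≤ C)
    (k : S → S → ℂ) (K : ℝ≥0) (hk : ∀ t s : S, ‖k t s‖₊ ≤ K)
    (c : S → ℂ) (hc : Summable fun s => ‖c s‖) (x : S) :
    ∑' t : {t : S // x ≤ t}, ∑' s : {s : S // (t : S) ≤ s}, k t s * c s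
      = ∑' s : {s : S // x ≤ s}, (∑ t ∈ Finset.Icc x (s : S), k t (s : S)) * c s := by
  classical
  set F : {q : S × S // x ≤ q.1 ∧ q.1 ≤ q.2} → ℂ :=
    fun q => k (q : S × S).1 (q : S × S).2 * c (q : S × S).2 with hF
  -- fibers of e4 are finite
  have hfib : ∀ s : S, {t : S | x ≤ t ∧ t ≤ s}.Finite :=
    fun s => (hfin s).subset fun t ht => ht.2
  -- summability of F via ENNReal bound
  have henn : ∑' q, (‖F q‖₊ : ℝ≥0∞) ≠ ⊤ := by
    have h1 : ∑' q, (‖F q‖₊ : ℝ≥0∞)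
        = ∑' (s : {s : S // x ≤ s}) (t : {t : S | x ≤ t ∧ t ≤ (s : S)}),
            (‖k t s * c (s : S)‖₊ : ℝ≥0∞) := by
      have e2 : ∑' (s : {s : S // x ≤ s}) (t : {t : S | x ≤ t ∧ t ≤ (s : S)}),
          (‖k t s * c (s : S)‖₊ : ℝ≥0∞)
          = ∑' (s : {s : S // x ≤ s}) (t : {t : S | x ≤ t ∧ t ≤ (s : S)}),
              (fun σ : (Σ s : {s : S // x ≤ s}, {t : S // x ≤ t ∧ t ≤ (s : S)}) =>
                (‖F (e4 x σ)‖₊ : ℝ≥0∞)) ⟨s, t⟩ :=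
        tsum_congr fun s => tsum_congr fun t => rfl
      exact ((Equiv.tsum_eq (e4 x) (fun q => (‖F q‖₊ : ℝ≥0∞))).symm).trans
        ((ENNReal.tsum_sigma' _).trans e2.symm)
    rw [h1]
    have h2 : ∀ s : {s : S // x ≤ s},
        ∑' t : {t : S | x ≤ t ∧ t ≤ (s : S)}, (‖k t s * c (s : S)‖₊ : ℝ≥0∞)
          ≤ (C : ℝ≥0∞) * (K : ℝ≥0∞) * (‖c (s : S)‖₊ : ℝ≥0∞) := by
      intro s
      rw [tsum_subtype_eq_sum' (f := fun t => (‖k t (s : S) * c (s : S)‖₊ : ℝ≥0∞)) (hfib s)]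
      calc ∑ t ∈ (hfib s).toFinset, (‖k t s * c (s : S)‖₊ : ℝ≥0∞)
          ≤ ∑ _t ∈ (hfib s).toFinset, (K : ℝ≥0∞) * (‖c (s : S)‖₊ : ℝ≥0∞) := by
            refine Finset.sum_le_sum fun t _ => ?_
            rw [nnnorm_mul, ENNReal.coe_mul]
            exact mul_le_mul_left (ENNReal.coe_le_coe.2 (hk t s)) _
        _ = ((hfib s).toFinset.card : ℝ≥0∞) * ((K : ℝ≥0∞) * (‖c (s : S)‖₊ : ℝ≥0∞)) := by
            rw [Finset.sum_const, nsmul_eq_mul]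
        _ ≤ (C : ℝ≥0∞) * (K : ℝ≥0∞) * (‖c (s : S)‖₊ : ℝ≥0∞) := by
            rw [mul_assoc]
            refine mul_le_mul_left ?_ _
            refine Nat.cast_le.2 ?_
            calc (hfib s).toFinset.card ≤ (hfin (s : S)).toFinset.card := by
                  refine Finset.card_le_card fun t ht => ?_
                  simp only [Set.Finite.mem_toFinset, Set.mem_setOf_eq] at *
                  exact ht.2
              _ ≤ C := by
                  rw [← Set.ncard_eq_toFinset_card _ (hfin (s : S))]
                  exact hcard (s : S)
    refine ne_top_of_le_ne_top
      (b := (C : ℝ≥0∞) * (K : ℝ≥0∞) * ∑' s : S, (‖c s‖₊ : ℝ≥0∞)) ?_ ?_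
    · exact ENNReal.mul_ne_top (ENNReal.mul_ne_top (by simp) (by simp))
        ((summable_norm_iff_enn c).1 hc)
    · refine (ENNReal.tsum_le_tsum h2).trans ?_
      rw [ENNReal.tsum_mul_left]
      exact mul_le_mul_right
        (ENNReal.tsum_comp_le_tsum_of_injective Subtype.coe_injective
          (fun s => (‖c s‖₊ : ℝ≥0∞))) _
  have hFs : Summable F := summable_of_enn _ henn
  have hLHS : ∑' t : {t : S // x ≤ t}, ∑' s : {s : S // (t : S) ≤ s}, k t s * c s
      = ∑' q, F q := by
    have hs3 : Summable (fun σ : (Σ t : {t : S // x ≤ t}, {s : S // (t : S) ≤ s}) => F (e3 x σ)) :=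
      (e3 x).summable_iff.2 hFs
    have e1 : ∑' (t : {t : S // x ≤ t}) (s : {s : S // (t : S) ≤ s}), k t s * c s
        = ∑' (t : {t : S // x ≤ t}) (s : {s : S // (t : S) ≤ s}),
            (fun σ : (Σ t : {t : S // x ≤ t}, {s : S // (t : S) ≤ s}) => F (e3 x σ)) ⟨t, s⟩ :=
      tsum_congr fun t => tsum_congr fun s => rfl
    exact e1.trans (hs3.tsum_sigma.symm.trans (Equiv.tsum_eq (e3 x) F))
  have hRHS : ∑' q, F q
      = ∑' s : {s : S // x ≤ s}, ∑' t : {t : S | x ≤ t ∧ t ≤ (s : S)}, k t s * c (s : S) := by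
    have hs4 : Summable (fun σ : (Σ s : {s : S // x ≤ s}, {t : S // x ≤ t ∧ t ≤ (s : S)}) => F (e4 x σ)) :=
      (e4 x).summable_iff.2 hFs
    have e5 : ∑' (s : {s : S // x ≤ s}) (t : {t : S | x ≤ t ∧ t ≤ (s : S)}), k t s * c (s : S)
        = ∑' (s : {s : S // x ≤ s}) (t : {t : S | x ≤ t ∧ t ≤ (s : S)}),
            (fun σ : (Σ s : {s : S // x ≤ s}, {t : S // x ≤ t ∧ t ≤ (s : S)}) => F (e4 x σ)) ⟨s, t⟩ :=
      tsum_congr fun s => tsum_congr fun t => rfl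
    exact ((Equiv.tsum_eq (e4 x) F).symm).trans (hs4.tsum_sigma.trans e5.symm)
  rw [hLHS, hRHS]
  refine tsum_congr fun s => ?_
  rw [tsum_subtype_eq_sum' (f := fun t => k t (s : S) * c (s : S)) (hfib (s : S))]
  have hfs : (hfib (s : S)).toFinset = Finset.Icc x (s : S) := by
    ext t
    simp [Finset.mem_Icc]
  rw [hfs, Finset.sum_mul]
end LemB
section Hom
variable {S : Type*} [SemilatticeInf S]

def e6 (x : S) : (Σ z : {z : S // x ≤ z}, {p : S × S // p.1 ⊓ p.2 = (z : S)})
    ≃ {p : S × S // x ≤ p.1 ⊓ p.2} where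
  toFun σ := ⟨σ.2.1, σ.2.2.symm ▸ σ.1.2⟩
  invFun q := ⟨⟨q.1.1 ⊓ q.1.2, q.2⟩, ⟨q.1, rfl⟩⟩
  left_inv := by rintro ⟨⟨z, hz⟩, ⟨p, hp⟩⟩; dsimp at hp; subst hp; rfl
  right_inv := by rintro ⟨p, hp⟩; rfl

def e7 (x : S) : ({s : S // x ≤ s} × {t : S // x ≤ t}) ≃ {p : S × S // x ≤ p.1 ⊓ p.2} where
  toFun st := ⟨(st.1.1, st.2.1), le_inf st.1.2 st.2.2⟩
  invFun q := ⟨⟨q.1.1, q.2.trans inf_le_left⟩, ⟨q.1.2, q.2.trans inf_le_right⟩⟩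
  left_inv := by rintro ⟨⟨s, hs⟩, ⟨t, ht⟩⟩; rfl
  right_inv := by rintro ⟨⟨s, t⟩, h⟩; rfl

lemma hom_lemma (a b : S → ℂ) (ha : Summable fun t => ‖a t‖) (hb : Summable fun t => ‖b t‖)
    (x : S) :
    ∑' z : {z : S // x ≤ z},
        ∑' p : {p : S × S // p.1 ⊓ p.2 = (z : S)}, a (p : S × S).1 * b (p : S × S).2
      = (∑' s : {s : S // x ≤ s}, a s) * (∑' t : {t : S // x ≤ t}, b t) := by
  have hf : Summable (fun p : S × S => a p.1 * b p.2) := summable_mul_of_summable_norm ha hb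
  set G : {p : S × S // x ≤ p.1 ⊓ p.2} → ℂ :=
    fun q => a (q : S × S).1 * b (q : S × S).2 with hG
  have hGs : Summable G := hf.subtype _
  have hLHS : ∑' z : {z : S // x ≤ z},
      ∑' p : {p : S × S // p.1 ⊓ p.2 = (z : S)}, a (p : S × S).1 * b (p : S × S).2
      = ∑' q, G q := by
    have hs6 : Summable (fun σ : (Σ z : {z : S // x ≤ z}, {p : S × S // p.1 ⊓ p.2 = (z : S)}) =>
        G (e6 x σ)) := (e6 x).summable_iff.2 hGs
    have e1 : ∑' (z : {z : S // x ≤ z}) (p : {p : S × S // p.1 ⊓ p.2 = (z : S)}),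
        a (p : S × S).1 * b (p : S × S).2
        = ∑' (z : {z : S // x ≤ z}) (p : {p : S × S // p.1 ⊓ p.2 = (z : S)}),
            (fun σ : (Σ z : {z : S // x ≤ z}, {p : S × S // p.1 ⊓ p.2 = (z : S)}) =>
              G (e6 x σ)) ⟨z, p⟩ :=
      tsum_congr fun z => tsum_congr fun p => rfl
    exact e1.trans (hs6.tsum_sigma.symm.trans (Equiv.tsum_eq (e6 x) G))
  have hRHS : (∑' s : {s : S // x ≤ s}, a s) * (∑' t : {t : S // x ≤ t}, b t)
      = ∑' q, G q := by
    have h1 : (∑' s : {s : S // x ≤ s}, a s) * (∑' t : {t : S // x ≤ t}, b t)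
        = ∑' st : ({s : S // x ≤ s} × {t : S // x ≤ t}), a st.1 * b st.2 :=
      tsum_mul_tsum_of_summable_norm (ha.subtype _) (hb.subtype _)
    rw [h1, ← Equiv.tsum_eq (e7 x) G]
    rfl
  rw [hLHS, hRHS]
end Hom

/-- Let `S` be a locally `C`-finite semilattice. Then the Schützenberger
representation `Γ : ℓ¹(S) → ℓ¹(S)`, from the convolution algebra to `ℓ¹(S)` with
pointwise multiplication, is a continuous algebra isomorphism whose inverse has
operator norm at most `2^{C−1}`. -/
theorem schutzRep_algebra_isomorphism {S : Type*} [CommSemigroup S]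
    (hidem : ∀ s : S, s * s = s) (C : ℕ) (hCpos : 0 < C)
    (hC : ∀ f : S, {y : S | y * f = y}.Finite ∧ {y : S | y * f = y}.ncard ≤ C) :
    ∃ M : (S → ℂ) → (S → ℂ),
      -- Γ is bounded (continuous) from ℓ¹ to ℓ¹:
      (∀ a : S → ℂ, Summable (fun t => ‖a t‖) →
          Summable (fun x => ‖schutzRep a x‖) ∧
          ∑' x : S, ‖schutzRep a x‖ ≤ C * ∑' t : S, ‖a t‖) ∧
      -- Γ is an algebra homomorphism (convolution to pointwise product):
      (∀ a b : S → ℂ, Summable (fun t => ‖a t‖) → Summable (fun t => ‖b t‖) →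
          schutzRep (l1Conv a b) = schutzRep a * schutzRep b) ∧
      -- M is a two-sided inverse of Γ on ℓ¹, of norm at most 2^(C-1):
      (∀ a : S → ℂ, Summable (fun t => ‖a t‖) →
          (Summable (fun x => ‖M a x‖) ∧
            ∑' x : S, ‖M a x‖ ≤ 2 ^ (C - 1) * ∑' t : S, ‖a t‖) ∧
          schutzRep (M a) = a ∧ M (schutzRep a) = a) := by
  classical
  letI : SemilatticeInf S :=
    { le := fun x y => x * y = x
      le_refl := hidem
      le_trans := fun x y z hxy hyz => by
        show x * z = x
        calc x * z = (x * y) * z := by rw [hxy]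
          _ = x * (y * z) := mul_assoc ..
          _ = x * y := by rw [hyz]
          _ = x := hxy
      le_antisymm := fun x y hxy hyx => by
        show x = y
        calc x = x * y := hxy.symm
          _ = y * x := mul_comm ..
          _ = y := hyx
      inf := (· * ·)
      inf_le_left := fun x y => by
        show (x * y) * x = x * y
        calc (x * y) * x = (y * x) * x := by rw [mul_comm x y]
          _ = y * (x * x) := mul_assoc ..
          _ = y * x := by rw [hidem x]
          _ = x * y := mul_comm ..
      inf_le_right := fun x y => by
        show (x * y) * y = x * y
        calc (x * y) * y = x * (y * y) := mul_assoc ..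
          _ = x * y := by rw [hidem y]
      le_inf := fun z x y hzx hzy => by
        show z * (x * y) = z
        calc z * (x * y) = (z * x) * y := (mul_assoc ..).symm
          _ = z * y := by rw [hzx]
          _ = z := hzy }
  letI : DecidableEq S := Classical.decEq S
  letI : LocallyFiniteOrder S := LocallyFiniteOrder.ofFiniteIcc
    (fun a b => ((hC b).1.subset (fun z hz => hz.2)))
  have hfin : ∀ t : S, {x : S | x ≤ t}.Finite := fun t => (hC t).1
  have hcard : ∀ t : S, {x : S | x ≤ t}.ncard ≤ C := fun t => (hC t).2
  have hC1 : 1 ≤ C := hCpos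
  have hkmu : ∀ t s : S, ‖(mu ℂ t s : ℂ)‖₊ ≤ 2 ^ (C - 1) := mu_nnnorm_le hC1 hfin hcard
  have hKmu : ∀ t : S, ∑ x ∈ (hfin t).toFinset, (‖(mu ℂ x t : ℂ)‖₊ : ℝ≥0∞)
      ≤ ((2 ^ (C - 1) : ℝ≥0) : ℝ≥0∞) := by
    intro t
    rw [← ENNReal.coe_finset_sum]
    exact ENNReal.coe_le_coe.2 (mu_toFinset_sum_le hC1 hfin hcard t)
  refine ⟨fun a x => ∑' t : {t : S // x ≤ t}, (mu ℂ x t : ℂ) * a t, ?_, ?_, ?_⟩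
  · -- boundedness of Γ
    intro a ha
    have hK1 : ∀ t : S, ∑ x ∈ (hfin t).toFinset, (‖(1 : ℂ)‖₊ : ℝ≥0∞) ≤ ((C : ℝ≥0) : ℝ≥0∞) := by
      intro t
      simp only [nnnorm_one, ENNReal.coe_one, Finset.sum_const, nsmul_eq_mul, mul_one]
      rw [show ((C : ℝ≥0) : ℝ≥0∞) = (C : ℝ≥0∞) by simp]
      refine Nat.cast_le.2 ?_
      rw [← Set.ncard_eq_toFinset_card _ (hfin t)]
      exact hcard t
    have h := lemA hfin (fun _ _ => (1 : ℂ)) (C : ℝ≥0) hK1 a ha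
    have hrepr : schutzRep a = fun x => ∑' t : {t : S // x ≤ t}, (1 : ℂ) * a t :=
      funext fun x => tsum_congr fun t => (one_mul _).symm
    rw [hrepr]
    refine ⟨h.1, h.2.trans_eq ?_⟩
    norm_num
  · -- homomorphism
    intro a b ha hb
    funext x
    show ∑' z : {z : S // x ≤ z},
        (∑' p : {p : S × S // p.1 ⊓ p.2 = (z : S)}, a (p : S × S).1 * b (p : S × S).2)
      = (∑' s : {s : S // x ≤ s}, a s) * (∑' t : {t : S // x ≤ t}, b t)
    exact hom_lemma a b ha hb x
  · -- inverse
    intro a ha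
    refine ⟨?_, ?_, ?_⟩
    · -- norm bound of M
      have h := lemA hfin (fun x t => (mu ℂ x t : ℂ)) (2 ^ (C - 1) : ℝ≥0) hKmu a ha
      refine ⟨h.1, h.2.trans_eq ?_⟩
      norm_num
    · -- Γ ∘ M = id
      funext x
      show ∑' t : {t : S // x ≤ t},
          (∑' s : {s : S // (t : S) ≤ s}, (mu ℂ (t : S) s : ℂ) * a s) = a x
      rw [lemB hfin hcard (fun t s => (mu ℂ t s : ℂ)) (2 ^ (C - 1)) hkmu a ha x]
      have hmu : ∀ s : {s : S // x ≤ s},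
          (∑ t ∈ Finset.Icc x (s : S), (mu ℂ t (s : S) : ℂ)) * a s
            = (if x = (s : S) then (1 : ℂ) else 0) * a s := by
        intro s
        rw [sum_Icc_mu_left]
      rw [tsum_congr hmu]
      rw [tsum_eq_single (⟨x, le_refl x⟩ : {s : S // x ≤ s}) ?_]
      · simp
      · intro s hs
        have hxs : x ≠ (s : S) := by
          intro h
          exact hs (Subtype.ext h.symm)
        rw [if_neg hxs, zero_mul]
    · -- M ∘ Γ = id
      funext x
      show ∑' t : {t : S // x ≤ t}, (mu ℂ x t : ℂ) * schutzRep a t = a x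
      have hstep : ∀ t : {t : S // x ≤ t},
          (mu ℂ x t : ℂ) * schutzRep a t
            = ∑' s : {s : S // (t : S) ≤ s}, (mu ℂ x (t : S) : ℂ) * a s := by
        intro t
        exact (tsum_mul_left).symm
      rw [tsum_congr hstep]
      rw [lemB hfin hcard (fun t s => (mu ℂ x t : ℂ)) (2 ^ (C - 1))
        (fun t s => hkmu x t) a ha x]
      have hmu : ∀ s : {s : S // x ≤ s},
          (∑ t ∈ Finset.Icc x (s : S), (mu ℂ x t : ℂ)) * a s
            = (if x = (s : S) then (1 : ℂ) else 0) * a s := by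
        intro s
        rw [sum_Icc_mu_right]
      rw [tsum_congr hmu]
      rw [tsum_eq_single (⟨x, le_refl x⟩ : {s : S // x ≤ s}) ?_]
      · simp
      · intro s hs
        have hxs : x ≠ (s : S) := by
          intro h
          exact hs (Subtype.ext h.symm)
        rw [if_neg hxs, zero_mul]
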